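/- For all Schwartz functions u, v ∈ 𝒮(ℝ), the function θ ↦ 𝔽_pul(u,v)(θ) = ∫₀^{+∞} u(θ + δ₁X) · v(θ + δ₃X) dX is well defined for every θ ∈ ℝ and belongs to the Schwartz space 𝒮(ℝ). -/

import Mathlib

open MeasureTheory SchwartzMap

noncomputable section Aux

lemma schwartz_ptbound (u : 𝓢(ℝ, ℂ)) (m : ℕ) :
    ∃ C : ℝ, 0 ≤ C ∧ ∀ x : ℝ, (1 + |x|) ^ m * ‖u x‖ ≤ C := by
  refine ⟨2 ^ m * (Finset.Iic (m, 0)).sup (fun p => SchwartzMap.seminorm ℝ p.1 p.2) u, ?_, ?_⟩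
  · have h := SchwartzMap.one_add_le_sup_seminorm_apply (𝕜 := ℝ) (m := (m, 0))
      le_rfl le_rfl u 0
    refine le_trans ?_ h
    positivity
  · intro x
    have h := SchwartzMap.one_add_le_sup_seminorm_apply (𝕜 := ℝ) (m := (m, 0))
      le_rfl le_rfl u x
    simpa [norm_iteratedFDeriv_zero, Real.norm_eq_abs] using h

/-- The key bound. -/
lemma key_bound (δ₁ δ₃ : ℝ) (hδ : δ₃ - δ₁ = 1) (u v : 𝓢(ℝ, ℂ)) (k : ℕ) :
    ∃ C : ℝ, 0 ≤ C ∧ ∀ θ X : ℝ, 0 ≤ X →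
      (1 + |θ|) ^ k * ‖u (θ + δ₁ * X) * v (θ + δ₃ * X)‖ ≤ C * (1 + X ^ 2)⁻¹ := by
  obtain ⟨Cu, hCu0, hCu⟩ := schwartz_ptbound u (k + 2)
  obtain ⟨Cv, hCv0, hCv⟩ := schwartz_ptbound v (k + 2)
  set c : ℝ := 1 + |δ₁| + |δ₃| with hc
  have hc1 : 1 ≤ c := by
    have := abs_nonneg δ₁; have := abs_nonneg δ₃; simp only [hc]; linarith
  refine ⟨c ^ k * Cu * Cv, by positivity, ?_⟩
  intro θ X hX
  set a : ℝ := θ + δ₁ * X with ha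
  set b : ℝ := θ + δ₃ * X with hb
  have hX2 : (0:ℝ) < 1 + X ^ 2 := by positivity
  have habs_a : (0:ℝ) ≤ |a| := abs_nonneg a
  have habs_b : (0:ℝ) ≤ |b| := abs_nonneg b
  have hθ : θ = δ₃ * a - δ₁ * b := by
    linear_combination (-θ) * hδ - δ₃ * ha + δ₁ * hb
  have h1 : 1 + |θ| ≤ c * ((1 + |a|) * (1 + |b|)) := by
    have hh : |θ| ≤ |δ₃| * |a| + |δ₁| * |b| := by
      rw [hθ]
      calc |δ₃ * a - δ₁ * b| ≤ |δ₃ * a| + |δ₁ * b| := abs_sub _ _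
        _ = |δ₃| * |a| + |δ₁| * |b| := by rw [abs_mul, abs_mul]
    have h₁ := abs_nonneg δ₁; have h₃ := abs_nonneg δ₃
    nlinarith [mul_nonneg habs_a habs_b]
  have h2 : 1 + X ^ 2 ≤ ((1 + |a|) * (1 + |b|)) ^ 2 := by
    have hXab : X ≤ |a| + |b| := by
      have hba : X = b - a := by linear_combination (-X) * hδ + ha - hb
      calc X = b - a := hba
        _ ≤ |b - a| := le_abs_self _
        _ ≤ |b| + |a| := abs_sub _ _
        _ = |a| + |b| := by ring
    nlinarith [mul_nonneg habs_a habs_b]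
  rw [norm_mul, ← mul_comm ((1 + X ^ 2)⁻¹) _, ← div_eq_inv_mul, le_div_iff₀ hX2]
  have hP : (0:ℝ) < 1 + |a| := by linarith
  have hQ : (0:ℝ) < 1 + |b| := by linarith
  calc (1 + |θ|) ^ k * (‖u a‖ * ‖v b‖) * (1 + X ^ 2)
      ≤ (c * ((1 + |a|) * (1 + |b|))) ^ k * (‖u a‖ * ‖v b‖) * ((1 + |a|) * (1 + |b|)) ^ 2 := by
        gcongr <;> first | positivity | linarith
    _ = c ^ k * ((1 + |a|) ^ (k + 2) * ‖u a‖) * ((1 + |b|) ^ (k + 2) * ‖v b‖) := by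
        rw [mul_pow, mul_pow]; ring
    _ ≤ c ^ k * Cu * ((1 + |b|) ^ (k + 2) * ‖v b‖) := by
        gcongr <;> first | positivity | exact hCu a
    _ ≤ c ^ k * Cu * Cv := by
        gcongr <;> first | positivity | exact hCv b

end Aux

section Main

variable {δ₁ δ₃ : ℝ}

/-- The bilinear pullback integral. -/
noncomputable def fpul (δ₁ δ₃ : ℝ) (u v : 𝓢(ℝ, ℂ)) (θ : ℝ) : ℂ :=
  ∫ X in Set.Ioi (0:ℝ), u (θ + δ₁ * X) * v (θ + δ₃ * X)

lemma integrable_bound (C : ℝ) :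
    IntegrableOn (fun X : ℝ => C * (1 + X ^ 2)⁻¹) (Set.Ioi 0) :=
  (integrable_inv_one_add_sq.const_mul C).integrableOn

lemma cont_integrand (u v : 𝓢(ℝ, ℂ)) (θ : ℝ) :
    Continuous (fun X : ℝ => u (θ + δ₁ * X) * v (θ + δ₃ * X)) :=
  ((u.continuous.comp (by continuity)).mul (v.continuous.comp (by continuity)))

lemma fpul_integrable (hδ : δ₃ - δ₁ = 1) (u v : 𝓢(ℝ, ℂ)) (θ : ℝ) :
    IntegrableOn (fun X : ℝ => u (θ + δ₁ * X) * v (θ + δ₃ * X)) (Set.Ioi 0) := by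
  obtain ⟨C, hC0, hC⟩ := key_bound δ₁ δ₃ hδ u v 0
  refine (integrable_bound C).mono' (cont_integrand u v θ).aestronglyMeasurable ?_
  filter_upwards [ae_restrict_mem measurableSet_Ioi] with X hX
  have := hC θ X (le_of_lt hX)
  simpa using this

lemma fpul_norm_bound (hδ : δ₃ - δ₁ = 1) (u v : 𝓢(ℝ, ℂ)) (k : ℕ) :
    ∃ C : ℝ, 0 ≤ C ∧ ∀ θ : ℝ, (1 + |θ|) ^ k * ‖fpul δ₁ δ₃ u v θ‖ ≤ C := by
  obtain ⟨C, hC0, hC⟩ := key_bound δ₁ δ₃ hδ u v k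
  refine ⟨C * Real.pi, ?_, ?_⟩
  · positivity
  intro θ
  have h1 : ‖fpul δ₁ δ₃ u v θ‖ ≤ ∫ X in Set.Ioi (0:ℝ), ‖u (θ + δ₁ * X) * v (θ + δ₃ * X)‖ :=
    norm_integral_le_integral_norm _
  have hpos : (0:ℝ) ≤ (1 + |θ|) ^ k := by positivity
  calc (1 + |θ|) ^ k * ‖fpul δ₁ δ₃ u v θ‖
      ≤ (1 + |θ|) ^ k * ∫ X in Set.Ioi (0:ℝ), ‖u (θ + δ₁ * X) * v (θ + δ₃ * X)‖ :=
        mul_le_mul_of_nonneg_left h1 hpos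
    _ = ∫ X in Set.Ioi (0:ℝ), (1 + |θ|) ^ k * ‖u (θ + δ₁ * X) * v (θ + δ₃ * X)‖ :=
        (integral_const_mul _ _).symm
    _ ≤ ∫ X in Set.Ioi (0:ℝ), C * (1 + X ^ 2)⁻¹ := by
        refine setIntegral_mono_on ?_ ?_ measurableSet_Ioi ?_
        · exact ((fpul_integrable hδ u v θ).norm.const_mul _)
        · exact integrable_bound C
        · intro X hX
          exact hC θ X (le_of_lt hX)
    _ ≤ ∫ X : ℝ, C * (1 + X ^ 2)⁻¹ := by
        refine setIntegral_le_integral (integrable_inv_one_add_sq.const_mul C) ?_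
        filter_upwards with X
        positivity
    _ = C * Real.pi := by
        rw [integral_const_mul, integral_univ_inv_one_add_sq]

end Main

section Deriv

variable {δ₁ δ₃ : ℝ}

lemma fpul_hasDerivAt (hδ : δ₃ - δ₁ = 1) (u v : 𝓢(ℝ, ℂ)) (θ₀ : ℝ) :
    HasDerivAt (fpul δ₁ δ₃ u v)
      (fpul δ₁ δ₃ (SchwartzMap.derivCLM ℝ ℂ u) v θ₀ + fpul δ₁ δ₃ u (SchwartzMap.derivCLM ℝ ℂ v) θ₀)
      θ₀ := by
  obtain ⟨C₁, hC₁0, hC₁⟩ := key_bound δ₁ δ₃ hδ (SchwartzMap.derivCLM ℝ ℂ u) v 0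
  obtain ⟨C₂, hC₂0, hC₂⟩ := key_bound δ₁ δ₃ hδ u (SchwartzMap.derivCLM ℝ ℂ v) 0
  set F' : ℝ → ℝ → ℂ := fun θ X =>
    (SchwartzMap.derivCLM ℝ ℂ u) (θ + δ₁ * X) * v (θ + δ₃ * X) +
      u (θ + δ₁ * X) * (SchwartzMap.derivCLM ℝ ℂ v) (θ + δ₃ * X) with hF'
  have key := hasDerivAt_integral_of_dominated_loc_of_deriv_le (μ := volume.restrict (Set.Ioi 0))
    (F := fun θ X => u (θ + δ₁ * X) * v (θ + δ₃ * X)) (F' := F')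
    (bound := fun X => (C₁ + C₂) * (1 + X ^ 2)⁻¹) (x₀ := θ₀) Filter.univ_mem
    (Filter.Eventually.of_forall fun θ => (cont_integrand u v θ).aestronglyMeasurable)
    (fpul_integrable hδ u v θ₀)
    (by
      refine Continuous.aestronglyMeasurable ?_
      exact (cont_integrand (SchwartzMap.derivCLM ℝ ℂ u) v θ₀).add
        (cont_integrand u (SchwartzMap.derivCLM ℝ ℂ v) θ₀))
    (by
      filter_upwards [ae_restrict_mem measurableSet_Ioi] with X hX θ hθ
      have h1 := hC₁ θ X (le_of_lt hX)
      have h2 := hC₂ θ X (le_of_lt hX)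
      simp only [pow_zero, one_mul] at h1 h2
      calc ‖F' θ X‖ ≤ ‖(SchwartzMap.derivCLM ℝ ℂ u) (θ + δ₁ * X) * v (θ + δ₃ * X)‖ +
            ‖u (θ + δ₁ * X) * (SchwartzMap.derivCLM ℝ ℂ v) (θ + δ₃ * X)‖ := norm_add_le _ _
        _ ≤ C₁ * (1 + X ^ 2)⁻¹ + C₂ * (1 + X ^ 2)⁻¹ := add_le_add h1 h2
        _ = (C₁ + C₂) * (1 + X ^ 2)⁻¹ := by ring)
    (integrable_bound (C₁ + C₂))
    (by
      filter_upwards [ae_restrict_mem measurableSet_Ioi] with X _ θ _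
      have hu : HasDerivAt (fun θ : ℝ => u (θ + δ₁ * X)) (deriv u (θ + δ₁ * X)) θ :=
        HasDerivAt.comp_add_const θ (δ₁ * X) (u.differentiable (θ + δ₁ * X)).hasDerivAt
      have hv : HasDerivAt (fun θ : ℝ => v (θ + δ₃ * X)) (deriv v (θ + δ₃ * X)) θ :=
        HasDerivAt.comp_add_const θ (δ₃ * X) (v.differentiable (θ + δ₃ * X)).hasDerivAt
      have : HasDerivAt (fun x => u (x + δ₁ * X) * v (x + δ₃ * X)) _ θ := hu.mul hv
      simpa [hF', SchwartzMap.derivCLM_apply, mul_comm] using this)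
  have h2 := key.2
  simp only [hF'] at h2
  have : (∫ X in Set.Ioi (0:ℝ), F' θ₀ X) =
      fpul δ₁ δ₃ (SchwartzMap.derivCLM ℝ ℂ u) v θ₀ + fpul δ₁ δ₃ u (SchwartzMap.derivCLM ℝ ℂ v) θ₀ := by
    rw [hF', fpul, fpul]
    exact integral_add (fpul_integrable hδ (SchwartzMap.derivCLM ℝ ℂ u) v θ₀)
      (fpul_integrable hδ u (SchwartzMap.derivCLM ℝ ℂ v) θ₀)
  rw [← this]
  exact key.2

end Deriv

section Smooth

variable {δ₁ δ₃ : ℝ}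

lemma fpul_deriv_eq (hδ : δ₃ - δ₁ = 1) (u v : 𝓢(ℝ, ℂ)) :
    deriv (fpul δ₁ δ₃ u v) = fun θ =>
      fpul δ₁ δ₃ (SchwartzMap.derivCLM ℝ ℂ u) v θ + fpul δ₁ δ₃ u (SchwartzMap.derivCLM ℝ ℂ v) θ :=
  funext fun θ => (fpul_hasDerivAt hδ u v θ).deriv

lemma fpul_differentiable (hδ : δ₃ - δ₁ = 1) (u v : 𝓢(ℝ, ℂ)) :
    Differentiable ℝ (fpul δ₁ δ₃ u v) :=
  fun θ => (fpul_hasDerivAt hδ u v θ).differentiableAt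

lemma fpul_contDiff (hδ : δ₃ - δ₁ = 1) (n : ℕ) :
    ∀ u v : 𝓢(ℝ, ℂ), ContDiff ℝ n (fpul δ₁ δ₃ u v) := by
  induction n with
  | zero =>
    intro u v
    exact contDiff_zero.mpr (fpul_differentiable hδ u v).continuous
  | succ n ih =>
    intro u v
    have hcast : ((n + 1 : ℕ) : WithTop ℕ∞) = (n : WithTop ℕ∞) + 1 := by norm_cast
    rw [hcast, contDiff_succ_iff_deriv]
    refine ⟨fpul_differentiable hδ u v, by simp, ?_⟩
    rw [fpul_deriv_eq hδ u v]
    exact (ih (SchwartzMap.derivCLM ℝ ℂ u) v).add (ih u (SchwartzMap.derivCLM ℝ ℂ v))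

lemma fpul_smooth (hδ : δ₃ - δ₁ = 1) (u v : 𝓢(ℝ, ℂ)) :
    ContDiff ℝ (⊤ : ℕ∞) (fpul δ₁ δ₃ u v) :=
  contDiff_infty.mpr (fun n => fpul_contDiff hδ n u v)

lemma fpul_iteratedDeriv_decay (hδ : δ₃ - δ₁ = 1) (n : ℕ) :
    ∀ u v : 𝓢(ℝ, ℂ), ∀ k : ℕ, ∃ C : ℝ, ∀ θ : ℝ,
      ‖θ‖ ^ k * ‖iteratedDeriv n (fpul δ₁ δ₃ u v) θ‖ ≤ C := by
  induction n with
  | zero =>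
    intro u v k
    obtain ⟨C, hC0, hC⟩ := fpul_norm_bound hδ u v k
    refine ⟨C, fun θ => ?_⟩
    rw [iteratedDeriv_zero]
    refine le_trans ?_ (hC θ)
    have h1 : ‖θ‖ ^ k ≤ (1 + |θ|) ^ k :=
      pow_le_pow_left₀ (norm_nonneg θ) (by rw [Real.norm_eq_abs]; linarith [abs_nonneg θ]) k
    exact mul_le_mul_of_nonneg_right h1 (norm_nonneg _)
  | succ n ih =>
    intro u v k
    obtain ⟨C₁, hC₁⟩ := ih (SchwartzMap.derivCLM ℝ ℂ u) v k
    obtain ⟨C₂, hC₂⟩ := ih u (SchwartzMap.derivCLM ℝ ℂ v) k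
    refine ⟨C₁ + C₂, fun θ => ?_⟩
    rw [iteratedDeriv_succ', fpul_deriv_eq hδ u v]
    have hadd : iteratedDeriv n (fun θ =>
        fpul δ₁ δ₃ (SchwartzMap.derivCLM ℝ ℂ u) v θ + fpul δ₁ δ₃ u (SchwartzMap.derivCLM ℝ ℂ v) θ) θ =
        iteratedDeriv n (fpul δ₁ δ₃ (SchwartzMap.derivCLM ℝ ℂ u) v) θ +
          iteratedDeriv n (fpul δ₁ δ₃ u (SchwartzMap.derivCLM ℝ ℂ v)) θ := by
      have h1 := fpul_contDiff hδ n (SchwartzMap.derivCLM ℝ ℂ u) v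
      have h2 := fpul_contDiff hδ n u (SchwartzMap.derivCLM ℝ ℂ v)
      have := iteratedFDeriv_add_apply (i := n) (x := θ) h1.contDiffAt h2.contDiffAt
      simp only [iteratedDeriv_eq_iteratedFDeriv]
      rw [show (fun θ => fpul δ₁ δ₃ (SchwartzMap.derivCLM ℝ ℂ u) v θ +
            fpul δ₁ δ₃ u (SchwartzMap.derivCLM ℝ ℂ v) θ) =
          (fpul δ₁ δ₃ (SchwartzMap.derivCLM ℝ ℂ u) v) + (fpul δ₁ δ₃ u (SchwartzMap.derivCLM ℝ ℂ v))
          from rfl, this]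
      simp
    rw [hadd]
    calc ‖θ‖ ^ k * ‖iteratedDeriv n (fpul δ₁ δ₃ (SchwartzMap.derivCLM ℝ ℂ u) v) θ +
          iteratedDeriv n (fpul δ₁ δ₃ u (SchwartzMap.derivCLM ℝ ℂ v)) θ‖
        ≤ ‖θ‖ ^ k * (‖iteratedDeriv n (fpul δ₁ δ₃ (SchwartzMap.derivCLM ℝ ℂ u) v) θ‖ +
            ‖iteratedDeriv n (fpul δ₁ δ₃ u (SchwartzMap.derivCLM ℝ ℂ v)) θ‖) := by
          gcongr
          exact norm_add_le _ _
      _ = ‖θ‖ ^ k * ‖iteratedDeriv n (fpul δ₁ δ₃ (SchwartzMap.derivCLM ℝ ℂ u) v) θ‖ +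
            ‖θ‖ ^ k * ‖iteratedDeriv n (fpul δ₁ δ₃ u (SchwartzMap.derivCLM ℝ ℂ v)) θ‖ := by ring
      _ ≤ C₁ + C₂ := add_le_add (hC₁ θ) (hC₂ θ)

/-- The pullback as a Schwartz map. -/
noncomputable def fpulSchwartz (hδ : δ₃ - δ₁ = 1) (u v : 𝓢(ℝ, ℂ)) : 𝓢(ℝ, ℂ) where
  toFun := fpul δ₁ δ₃ u v
  smooth' := fpul_smooth hδ u v
  decay' := by
    intro k n
    obtain ⟨C, hC⟩ := fpul_iteratedDeriv_decay hδ n u v k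
    refine ⟨C, fun θ => ?_⟩
    rw [norm_iteratedFDeriv_eq_norm_iteratedDeriv]
    exact hC θ

end Smooth

theorem stmt12 (δ₁ δ₃ : ℝ) (hδ₁ : δ₁ ≠ 0) (hδ₃ : δ₃ = 1 + δ₁) (hδ₃' : δ₃ ≠ 0)
    (u v : SchwartzMap ℝ ℂ) :
    (∀ θ : ℝ,
      IntegrableOn (fun X => u (θ + δ₁ * X) * v (θ + δ₃ * X)) (Set.Ioi 0)) ∧
    ∃ w : SchwartzMap ℝ ℂ, ∀ θ : ℝ,
      w θ = ∫ X in Set.Ioi (0 : ℝ), u (θ + δ₁ * X) * v (θ + δ₃ * X) := by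
  have hδ : δ₃ - δ₁ = 1 := by rw [hδ₃]; ring
  exact ⟨fun θ => fpul_integrable hδ u v θ, ⟨fpulSchwartz hδ u v, fun θ => rfl⟩⟩
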